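/- arXiv:2212.14607 — 2 statements merged into one kernel-verified Lean document; each statement's English description precedes it below -/
import Mathlib

section
/- Let A be the lazy renewal matrix. For every positive integer n, lim_{m→∞} (1/m)·log |L(m,n)| = log((3+√5)/2), where |L(m,n)| is the number of admissible words of length m whose last letter is at most n. -/
def Adm (A : ℕ+ → ℕ+ → Bool) (w : List ℕ+) : Prop :=
  List.Chain' (fun a b => A a b = true) w

def LWords (A : ℕ+ → ℕ+ → Bool) (m : ℕ) (n : ℕ+) : Set (List ℕ+) :=
  {w : List ℕ+ | w.length = m ∧ Adm A w ∧ ∀ x ∈ w.getLast?, x ≤ n}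

def lazyRenewal (i j : ℕ+) : Bool :=
  decide (i = 1 ∨ (j : ℕ) + 1 = (i : ℕ) ∨ j = i)

def preds (j : ℕ+) : Finset ℕ+ := {1, j + 1, j}

lemma mem_preds {i j : ℕ+} : i ∈ preds j ↔ lazyRenewal i j = true := by
  simp only [preds, lazyRenewal, Finset.mem_insert, Finset.mem_singleton, decide_eq_true_eq]
  constructor
  · rintro (h | h | h)
    · exact Or.inl h
    · exact Or.inr (Or.inl (by rw [h]; simp [PNat.add_coe]))
    · exact Or.inr (Or.inr h.symm)
  · rintro (h | h | h)
    · exact Or.inl h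
    · refine Or.inr (Or.inl ?_)
      apply PNat.coe_injective
      simp [PNat.add_coe, ← h]
    · exact Or.inr (Or.inr h.symm)

def Wfin : ℕ → ℕ+ → Finset (List ℕ+)
  | 0, _ => {[]}
  | (m+1), j => ((preds j).biUnion (Wfin m)).image (· ++ [j])

lemma Wfin_succ (m : ℕ) (j : ℕ+) :
    Wfin (m+1) j = ((preds j).biUnion (Wfin m)).image (· ++ [j]) := rfl

lemma mem_Wfin_succ {m : ℕ} {j : ℕ+} {w : List ℕ+} :
    w ∈ Wfin (m+1) j ↔ ∃ v, (∃ i ∈ preds j, v ∈ Wfin m i) ∧ v ++ [j] = w := by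
  rw [Wfin_succ, Finset.mem_image]
  simp only [Finset.mem_biUnion]

lemma adm_append {v : List ℕ+} {i j : ℕ+} (hadm : Adm lazyRenewal v)
    (hlast : v.getLast? = some i) (hij : lazyRenewal i j = true) :
    Adm lazyRenewal (v ++ [j]) := by
  rw [Adm, List.Chain', List.isChain_append]
  refine ⟨hadm, List.isChain_singleton _, ?_⟩
  intro x hx y hy
  simp only [List.head?_cons, Option.mem_def, Option.some.injEq] at hy
  rw [hlast] at hx
  simp only [Option.mem_def, Option.some.injEq] at hx
  subst hx; subst hy; exact hij

lemma mem_Wfin : ∀ (m : ℕ) (j : ℕ+) (w : List ℕ+),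
    w ∈ Wfin (m+1) j ↔ w.length = m + 1 ∧ Adm lazyRenewal w ∧ w.getLast? = some j := by
  intro m
  induction m with
  | zero =>
    intro j w
    constructor
    · intro hw
      rw [mem_Wfin_succ] at hw
      obtain ⟨v, ⟨i, hi, hv⟩, rfl⟩ := hw
      simp only [Wfin, Finset.mem_singleton] at hv
      subst hv
      simp [Adm, List.Chain']
    · rintro ⟨hlen, hadm, hlast⟩
      match w, hlen with
      | [a], _ =>
        simp only [List.getLast?_singleton, Option.some.injEq] at hlast
        subst hlast
        rw [mem_Wfin_succ]
        exact ⟨[], ⟨1, by simp [mem_preds, lazyRenewal], by simp [Wfin]⟩, by simp⟩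
  | succ m ih =>
    intro j w
    constructor
    · intro hw
      rw [mem_Wfin_succ] at hw
      obtain ⟨v, ⟨i, hi, hv⟩, rfl⟩ := hw
      rw [ih] at hv
      obtain ⟨hlen, hadm, hlast⟩ := hv
      refine ⟨by simp [hlen], adm_append hadm hlast (mem_preds.mp hi), ?_⟩
      simp [List.getLast?_concat]
    · rintro ⟨hlen, hadm, hlast⟩
      have hne : w ≠ [] := by intro h; subst h; simp at hlen
      have hw : w.dropLast ++ [w.getLast hne] = w := List.dropLast_append_getLast hne
      have hlastj : w.getLast hne = j := by
        rw [List.getLast?_eq_getLast hne] at hlast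
        exact Option.some_injective _ hlast
      rw [hlastj] at hw
      have hdne : w.dropLast ≠ [] := by
        intro h
        have := congrArg List.length hw
        rw [h] at this
        simp at this
        omega
      have hdlen : w.dropLast.length = m + 1 + 1 - 1 := by
        rw [List.length_dropLast, hlen]
      set i := w.dropLast.getLast hdne with hi
      have hdlast : w.dropLast.getLast? = some i := List.getLast?_eq_getLast hdne
      have hchain : Adm lazyRenewal w.dropLast ∧ lazyRenewal i j = true := by
        rw [← hw, Adm, List.Chain', List.isChain_append] at hadm
        obtain ⟨h1, _, h3⟩ := hadm
        exact ⟨h1, h3 i (by rw [hdlast]; rfl) j (by simp)⟩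
      rw [mem_Wfin_succ]
      refine ⟨w.dropLast, ⟨i, mem_preds.mpr hchain.2, ?_⟩, hw⟩
      rw [ih]
      exact ⟨by omega, hchain.1, hdlast⟩

lemma Wfin_disjoint {m : ℕ} {i i' : ℕ+} (h : i ≠ i') :
    Disjoint (Wfin (m+1) i) (Wfin (m+1) i') := by
  rw [Finset.disjoint_left]
  intro w hw hw'
  rw [mem_Wfin] at hw hw'
  rw [hw.2.2] at hw'
  exact h (Option.some_injective _ hw'.2.2)

lemma card_Wfin : ∀ (m : ℕ) (j : ℕ+),
    (Wfin (m+1) j).card = if j = 1 then Nat.fib (2*m+1) else Nat.fib (2*m+2) := by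
  intro m
  induction m with
  | zero =>
    intro j
    have : Wfin 1 j = {[j]} := by
      ext w
      rw [mem_Wfin]
      constructor
      · rintro ⟨hlen, _, hlast⟩
        match w, hlen with
        | [a], _ =>
          simp only [List.getLast?_singleton, Option.some.injEq] at hlast
          simp [hlast]
      · rintro hw
        simp only [Finset.mem_singleton] at hw
        subst hw
        simp [Adm, List.Chain']
    rw [this]
    simp [Nat.fib]
  | succ m ih =>
    intro j
    rw [Wfin_succ]
    rw [Finset.card_image_of_injective _ (fun a b h => by simpa using h)]
    rw [Finset.card_biUnion (fun i _ i' _ h => Wfin_disjoint h)]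
    have e3 : Nat.fib (2*(m+1)+1) = Nat.fib (2*m+1) + Nat.fib (2*m+2) := by
      rw [show 2*(m+1)+1 = (2*m+1)+2 by ring, Nat.fib_add_two,
        show 2*m+1+1 = 2*m+2 by ring]
    have e4 : Nat.fib (2*(m+1)+2) = Nat.fib (2*m+2) + (Nat.fib (2*m+1) + Nat.fib (2*m+2)) := by
      rw [show 2*(m+1)+2 = (2*m+2)+2 by ring, Nat.fib_add_two,
        show 2*m+2+1 = 2*(m+1)+1 by ring, e3]
    by_cases hj : j = 1
    · subst hj
      have hpr : preds 1 = {1, 2} := by decide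
      rw [hpr, Finset.sum_insert (by decide), Finset.sum_singleton, ih, ih,
        if_pos rfl, if_neg (by decide : ¬ (2:ℕ+) = 1), e3, if_pos rfl]
    · have h1 : (1 : ℕ+) ≠ j + 1 := by
        intro h
        have := congrArg (PNat.val) h
        simp [PNat.add_coe] at this
      have h2 : (1 : ℕ+) ≠ j := fun h => hj h.symm
      have h3 : j + 1 ≠ j := by
        intro h
        have := congrArg (PNat.val) h
        simp [PNat.add_coe] at this
      have h4 : j + 1 ≠ 1 := fun h => h1 h.symm
      rw [show preds j = {1, j+1, j} from rfl]
      rw [Finset.sum_insert (by simp [h1, h2]), Finset.sum_insert (by simp [h3]),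
        Finset.sum_singleton, ih, ih, ih]
      rw [if_pos rfl, if_neg h4, if_neg hj, if_neg hj, e4]
      omega

lemma LWords_eq (m : ℕ) (n : ℕ+) :
    LWords lazyRenewal (m+1) n = ↑((Finset.Icc 1 n).biUnion (Wfin (m+1))) := by
  ext w
  simp only [LWords, Set.mem_setOf_eq, Finset.coe_biUnion, Set.mem_iUnion,
    Finset.mem_coe, Finset.mem_Icc]
  constructor
  · rintro ⟨hlen, hadm, hlast⟩
    have hne : w ≠ [] := by intro h; subst h; simp at hlen
    obtain ⟨j, hj⟩ : ∃ j, w.getLast? = some j := ⟨w.getLast hne, List.getLast?_eq_getLast hne⟩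
    refine ⟨j, ⟨⟨j.one_le, hlast j (by rw [hj]; rfl)⟩, ?_⟩⟩
    rw [mem_Wfin]
    exact ⟨hlen, hadm, hj⟩
  · rintro ⟨j, ⟨⟨_, hjn⟩, hw⟩⟩
    rw [mem_Wfin] at hw
    refine ⟨hw.1, hw.2.1, ?_⟩
    intro x hx
    rw [hw.2.2] at hx
    rw [Option.mem_def, Option.some.injEq] at hx
    subst hx
    exact hjn

lemma ncard_LWords (m : ℕ) (n : ℕ+) :
    (LWords lazyRenewal (m+1) n).ncard
      = Nat.fib (2*m+1) + ((n : ℕ) - 1) * Nat.fib (2*m+2) := by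
  rw [LWords_eq, Set.ncard_coe_finset]
  rw [Finset.card_biUnion (fun i _ i' _ h => Wfin_disjoint h)]
  have hsplit : Finset.Icc (1:ℕ+) n = insert 1 (Finset.Icc 2 n) := by
    ext j
    simp only [Finset.mem_Icc, Finset.mem_insert]
    constructor
    · rintro ⟨_, hj⟩
      by_cases h : j = 1
      · exact Or.inl h
      · refine Or.inr ⟨?_, hj⟩
        have : (1:ℕ+) < j := lt_of_le_of_ne j.one_le (Ne.symm h)
        exact this
    · rintro (rfl | ⟨h2, hj⟩)
      · exact ⟨le_refl _, n.one_le⟩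
      · exact ⟨j.one_le, hj⟩
  have h1notin : (1 : ℕ+) ∉ Finset.Icc 2 n := by
    simp only [Finset.mem_Icc]
    rintro ⟨h, _⟩
    exact absurd h (by decide)
  rw [hsplit, Finset.sum_insert h1notin, card_Wfin, if_pos rfl]
  congr 1
  rw [Finset.sum_congr rfl (fun j hj => by
    rw [card_Wfin, if_neg]
    intro h
    subst h
    exact h1notin hj)]
  rw [Finset.sum_const, PNat.card_Icc, smul_eq_mul]
  congr 1

open Real Filter

lemma gold_pow_two_add {k : ℕ} : goldenRatio ^ (k+2) = goldenRatio ^ (k+1) + goldenRatio ^ k := by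
  have : goldenRatio ^ (k+2) = goldenRatio ^ k * goldenRatio ^ 2 := by ring
  rw [this, goldenRatio_sq]
  ring

lemma fib_bounds : ∀ k : ℕ,
    goldenRatio ^ k ≤ (Nat.fib (k+2) : ℝ) ∧ (Nat.fib (k+2) : ℝ) ≤ goldenRatio ^ (k+1) := by
  have key : ∀ k : ℕ,
      (goldenRatio ^ k ≤ (Nat.fib (k+2) : ℝ) ∧ (Nat.fib (k+2) : ℝ) ≤ goldenRatio ^ (k+1)) ∧
      (goldenRatio ^ (k+1) ≤ (Nat.fib (k+3) : ℝ) ∧ (Nat.fib (k+3) : ℝ) ≤ goldenRatio ^ (k+2)) := by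
    intro k
    induction k with
    | zero =>
      have hg1 := one_lt_goldenRatio
      have hg2 := goldenRatio_lt_two
      have hsq := goldenRatio_sq
      have f2 : (Nat.fib 2 : ℝ) = 1 := by norm_num
      have f3 : (Nat.fib 3 : ℝ) = 2 := by norm_num
      refine ⟨⟨?_, ?_⟩, ?_, ?_⟩ <;>
        simp only [show (0:ℕ)+2=2 from rfl, show (0:ℕ)+3=3 from rfl, show (0:ℕ)+1=1 from rfl,
          f2, f3, pow_zero, pow_one] <;> nlinarith
    | succ k ih =>
      obtain ⟨⟨h1, h2⟩, ⟨h3, h4⟩⟩ := ih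
      refine ⟨⟨h3, h4⟩, ?_, ?_⟩
      · have e : (Nat.fib (k+1+3) : ℝ) = (Nat.fib (k+3) : ℝ) + (Nat.fib (k+2) : ℝ) := by
          rw [show k+1+3 = (k+2)+2 by ring, Nat.fib_add_two]
          push_cast
          ring_nf
        have p : goldenRatio ^ (k+1+1) = goldenRatio ^ (k+1) + goldenRatio ^ k := by
          rw [show k+1+1 = k+2 by ring]; exact gold_pow_two_add
        rw [e, p]
        linarith
      · have e : (Nat.fib (k+1+3) : ℝ) = (Nat.fib (k+3) : ℝ) + (Nat.fib (k+2) : ℝ) := by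
          rw [show k+1+3 = (k+2)+2 by ring, Nat.fib_add_two]
          push_cast
          ring_nf
        have p : goldenRatio ^ (k+1+2) = goldenRatio ^ (k+2) + goldenRatio ^ (k+1) := by
          rw [show k+1+2 = (k+1)+2 by ring]; exact gold_pow_two_add
        rw [e, p]
        linarith
  exact fun k => (key k).1

lemma tendsto_aux (a b : ℝ) :
    Tendsto (fun m : ℕ => (a * m + b) / m) atTop (nhds a) := by
  have h1 : Tendsto (fun m : ℕ => a + b * (m : ℝ)⁻¹) atTop (nhds (a + b * 0)) :=
    tendsto_const_nhds.add ((tendsto_inv_atTop_nhds_zero_nat (𝕜 := ℝ)).const_mul b)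
  rw [mul_zero, add_zero] at h1
  refine h1.congr' ?_
  filter_upwards [eventually_gt_atTop 0] with m hm
  have : (m : ℝ) ≠ 0 := Nat.cast_ne_zero.mpr hm.ne'
  field_simp

/-- for the lazy renewal matrix, for every positive integer `n`,
`lim_{m→∞} (1/m)·log |L(m,n)| = log((3+√5)/2)`. -/
theorem stmt15 (n : ℕ+) :
    Filter.Tendsto (fun m : ℕ => Real.log ((LWords lazyRenewal m n).ncard) / (m : ℝ))
      Filter.atTop (nhds (Real.log ((3 + Real.sqrt 5) / 2))) := by
  have hφ := one_lt_goldenRatio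
  have hφpos := goldenRatio_pos
  have h1n : 1 ≤ (n : ℕ) := n.pos
  have hlogφ : Real.log ((3 + Real.sqrt 5) / 2) = 2 * Real.log goldenRatio := by
    have h2 : (3 + Real.sqrt 5) / 2 = goldenRatio ^ 2 := by
      rw [goldenRatio_sq, goldenRatio]
      ring
    rw [h2, Real.log_pow]
    norm_num
  rw [hlogφ]
  have hlo : Tendsto
      (fun m : ℕ => ((2 * Real.log goldenRatio) * m + (-3 * Real.log goldenRatio)) / m)
      atTop (nhds (2 * Real.log goldenRatio)) := tendsto_aux _ _
  have hhi : Tendsto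
      (fun m : ℕ => ((2 * Real.log goldenRatio) * m + (Real.log n + Real.log goldenRatio)) / m)
      atTop (nhds (2 * Real.log goldenRatio)) := tendsto_aux _ _
  have hlogφpos : 0 < Real.log goldenRatio := Real.log_pos hφ
  refine tendsto_of_tendsto_of_tendsto_of_le_of_le' hlo hhi ?_ ?_
  · -- lower bound
    filter_upwards [eventually_ge_atTop 2] with m hm
    obtain ⟨M, rfl⟩ : ∃ M, m = M + 2 := ⟨m - 2, by omega⟩
    have hpos : (0 : ℝ) < ((M : ℝ) + 2) := by positivity
    rw [show (M + 2 : ℕ) = (M + 1) + 1 from rfl, ncard_LWords (M+1) n]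
    have hfib : goldenRatio ^ (2*M+1) ≤ (Nat.fib (2*(M+1)+1) : ℝ) := by
      have := (fib_bounds (2*M+1)).1
      rwa [show 2*M+1+2 = 2*(M+1)+1 by ring] at this
    set C : ℕ := Nat.fib (2*(M+1)+1) + ((n:ℕ) - 1) * Nat.fib (2*(M+1)+2) with hC
    have hle : goldenRatio ^ (2*M+1) ≤ (C : ℝ) := by
      have h0 : (Nat.fib (2*(M+1)+1) : ℝ) ≤ (C : ℝ) := by
        rw [hC]
        push_cast
        have hp : (0:ℝ) ≤ (((n:ℕ) - 1 : ℕ) : ℝ) * (Nat.fib (2*(M+1)+2) : ℝ) := by positivity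
        push_cast at hp
        linarith
      linarith
    have hlog : (2*(M:ℝ)+1) * Real.log goldenRatio ≤ Real.log (C : ℝ) := by
      have h := (Real.log_le_log_iff (by positivity)
        (lt_of_lt_of_le (by positivity) hle)).mpr hle
      rw [Real.log_pow] at h
      push_cast at h
      linarith
    gcongr
    push_cast
    linarith
  · -- upper bound
    filter_upwards [eventually_ge_atTop 2] with m hm
    obtain ⟨M, rfl⟩ : ∃ M, m = M + 2 := ⟨m - 2, by omega⟩
    have hpos : (0 : ℝ) < ((M : ℝ) + 2) := by positivity
    rw [show (M + 2 : ℕ) = (M + 1) + 1 from rfl, ncard_LWords (M+1) n]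
    set C : ℕ := Nat.fib (2*(M+1)+1) + ((n:ℕ) - 1) * Nat.fib (2*(M+1)+2) with hC
    have hCpos : (0:ℝ) < (C:ℝ) := by
      have : 0 < Nat.fib (2*(M+1)+1) := Nat.fib_pos.mpr (by omega)
      rw [hC]
      push_cast
      have : (1:ℝ) ≤ (Nat.fib (2*(M+1)+1) : ℝ) := by exact_mod_cast this
      positivity
    have hfib2 : (Nat.fib (2*(M+1)+2) : ℝ) ≤ goldenRatio ^ (2*M+3) := by
      have := (fib_bounds (2*M+2)).2
      rwa [show 2*M+2+2 = 2*(M+1)+2 by ring, show 2*M+2+1 = 2*M+3 by ring] at this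
    have hfib1 : (Nat.fib (2*(M+1)+1) : ℝ) ≤ (Nat.fib (2*(M+1)+2) : ℝ) :=
      Nat.cast_le.mpr (Nat.fib_mono (by omega))
    have hub : (C : ℝ) ≤ (n : ℕ) * goldenRatio ^ (2*M+3) := by
      rw [hC]
      push_cast [Nat.cast_sub h1n]
      have hf2pos : (0:ℝ) ≤ (Nat.fib (2*(M+1)+2) : ℝ) := by positivity
      have hn1 : (0:ℝ) ≤ ((n:ℕ):ℝ) - 1 := by
        have : (1:ℝ) ≤ ((n:ℕ):ℝ) := by exact_mod_cast h1n
        linarith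
      nlinarith
    have hlog : Real.log (C : ℝ) ≤ Real.log n + (2*(M:ℝ)+3) * Real.log goldenRatio := by
      have h := (Real.log_le_log_iff hCpos (lt_of_lt_of_le hCpos hub)).mpr hub
      rw [Real.log_mul (by positivity) (by positivity), Real.log_pow] at h
      push_cast at h
      linarith
    gcongr
    push_cast
    linarith
end

section
/- Let A be a 0-1 matrix over the positive integers that is uniformly column finite and topologically mixing, and suppose there exists a positive integer J such that {i : A(J,i) = 0} is finite (an A-infinite emitter); let N_J be the least j₀ such that A(J,j) = 1 for all j ≥ j₀. Then for every n ≥ N_J, limsup_{m→∞} (1/m)·log |L(m,n)| ≤ max_{1≤j≤n} ( limsup_{m→∞} (1/m)·log ℓ_m(j) ) + limsup_{m→∞} (1/m)·log I(m,n), where the limits superior on the right-hand side are taken in the extended real numbers. -/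
/-- Loops: admissible words of length `m+1` whose first and last letter both equal `j`. -/
def Loops (A : ℕ+ → ℕ+ → Bool) (m : ℕ) (j : ℕ+) : Set (List ℕ+) :=
  {w : List ℕ+ | w.length = m + 1 ∧ Adm A w ∧ w.head? = some j ∧ w.getLast? = some j}

/-- `ρ_A^{-1}(i) = {j : A(j,i) = 1}`. -/
def rhoInv (A : ℕ+ → ℕ+ → Bool) (i : ℕ+) : Set ℕ+ := {j : ℕ+ | A j i = true}

/-- `ρ_A^{-1}(B) = ⋃_{i ∈ B} ρ_A^{-1}(i)`. -/
def rhoInvSet (A : ℕ+ → ℕ+ → Bool) (B : Set ℕ+) : Set ℕ+ := ⋃ i ∈ B, rhoInv A i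

/-- `N(1,n) = {1,…,n}` and `N(m+1,n) = ρ_A^{-1}(N(m,n))` (value at `0` is junk). -/
def NSet (A : ℕ+ → ℕ+ → Bool) (n : ℕ+) : ℕ → Set ℕ+
  | 0 => ∅
  | 1 => {i : ℕ+ | i ≤ n}
  | (m + 2) => rhoInvSet A (NSet A n (m + 1))

/-- `I(m,n) = max N(m,n)` (as a supremum in `ℕ`). -/
noncomputable def ISup (A : ℕ+ → ℕ+ → Bool) (n : ℕ+) (m : ℕ) : ℕ :=
  sSup ((fun i : ℕ+ => (i : ℕ)) '' NSet A n m)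



lemma my_ncard_biUnion_le {ι α : Type*} (s : Finset ι) (f : ι → Set α) :
    (⋃ i ∈ s, f i).ncard ≤ ∑ i ∈ s, (f i).ncard := by
  classical
  induction s using Finset.induction_on with
  | empty => simp
  | insert _ _ ha ih =>
    rename_i a s
    rw [Finset.set_biUnion_insert, Finset.sum_insert ha]
    exact le_trans (Set.ncard_union_le _ _) (by omega)

lemma lwords_finite (A : ℕ+ → ℕ+ → Bool) (M : ℕ)
    (hUCF : ∀ j : ℕ+, {i : ℕ+ | A i j = true}.encard ≤ M) :
    ∀ (m : ℕ) (n : ℕ+), (LWords A m n).Finite := by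
  have hcol : ∀ b : ℕ+, {i : ℕ+ | A i b = true}.Finite := fun b =>
    Set.encard_lt_top_iff.mp (lt_of_le_of_lt (hUCF b) (WithTop.coe_lt_top M))
  intro m
  induction m with
  | zero =>
    intro n
    refine Set.Finite.subset (Set.finite_singleton ([] : List ℕ+)) ?_
    rintro w ⟨hlen, -, -⟩
    simp [List.length_eq_zero_iff] at hlen
    simp [hlen]
  | succ m ih =>
    intro n
    have hIic : ({i : ℕ+ | i ≤ n}).Finite := by
      refine Set.Finite.subset (Finset.Icc 1 n).finite_toSet ?_
      intro i hi
      simp only [Finset.coe_Icc, Set.mem_Icc]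
      exact ⟨i.one_le, hi⟩
    set T : Set ℕ+ := {i : ℕ+ | i ≤ n} ∪ ⋃ w ∈ LWords A m n, {i : ℕ+ | A i (w.head?.getD 1) = true} with hT
    have hTfin : T.Finite :=
      (hIic.union ((ih n).biUnion (fun w _ => hcol _)))
    refine Set.Finite.subset ((hTfin.prod (ih n)).image (fun p : ℕ+ × List ℕ+ => p.1 :: p.2)) ?_
    rintro w ⟨hlen, hadm, hlast⟩
    obtain ⟨a, t, rfl⟩ : ∃ a t, w = a :: t := by
      cases w with
      | nil => simp at hlen
      | cons a t => exact ⟨a, t, rfl⟩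
    have htmem : t ∈ LWords A m n := by
      refine ⟨by simpa using hlen, hadm.tail, ?_⟩
      cases t with
      | nil => simp
      | cons b t' =>
        intro x hx
        exact hlast x (by rw [List.getLast?_cons_cons]; exact hx)
    refine ⟨(a, t), ⟨?_, htmem⟩, rfl⟩
    cases t with
    | nil =>
      left
      exact hlast a (by simp)
    | cons b t' =>
      right
      refine Set.mem_biUnion htmem ?_
      have hab : A a b = true := (List.isChain_cons_cons.mp hadm).1
      simpa using hab

lemma loops_finite (A : ℕ+ → ℕ+ → Bool) (M : ℕ)
    (hUCF : ∀ j : ℕ+, {i : ℕ+ | A i j = true}.encard ≤ M) (m : ℕ) (j : ℕ+) :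
    (Loops A m j).Finite := by
  refine Set.Finite.subset (lwords_finite A M hUCF (m+1) j) ?_
  rintro w ⟨h1, h2, h3, h4⟩
  exact ⟨h1, h2, by rw [h4]; simp⟩


/-- let `A` be uniformly column finite and topologically mixing, and let
`J` be an `A`-infinite emitter (i.e. `{i : A(J,i) = 0}` is finite), with `N_J` the least
`j₀` such that `A(J,j) = 1` for all `j ≥ j₀`.  Then for every `n ≥ N_J`,
`limsup_m (1/m)·log |L(m,n)| ≤ max_{1≤j≤n} limsup_m (1/m)·log ℓ_m(j)
  + limsup_m (1/m)·log I(m,n)`, the right-hand limits superior being taken in the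
extended reals. -/
theorem stmt18 (A : ℕ+ → ℕ+ → Bool) (M : ℕ)
    (hUCF : ∀ j : ℕ+, {i : ℕ+ | A i j = true}.encard ≤ M)
    (hmix : ∀ i j : ℕ+, ∃ N : ℕ, ∀ m : ℕ, N ≤ m →
      ∃ w : List ℕ+, w.length = m + 1 ∧ Adm A w ∧
        w.head? = some i ∧ w.getLast? = some j)
    (J : ℕ+) (hJ : {i : ℕ+ | A J i = false}.Finite)
    (NJ : ℕ+) (hNJ : IsLeast {j₀ : ℕ+ | ∀ j : ℕ+, j₀ ≤ j → A J j = true} NJ)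
    (n : ℕ+) (hn : NJ ≤ n) :
    Filter.limsup (fun m : ℕ =>
        ((Real.log ((LWords A m n).ncard) / (m : ℝ) : ℝ) : EReal)) Filter.atTop
      ≤ (⨆ j : ℕ+, ⨆ _ : j ≤ n,
          Filter.limsup (fun m : ℕ =>
            ((Real.log ((Loops A m j).ncard) / (m : ℝ) : ℝ) : EReal)) Filter.atTop)
        + Filter.limsup (fun m : ℕ =>
            ((Real.log (ISup A n m) / (m : ℝ) : ℝ) : EReal)) Filter.atTop := by
  choose Nf hNf using hmix
  set C : ℕ := 2 + (Finset.Icc 1 n).sup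
      (fun j => max (Nf j J) ((Finset.Icc 1 NJ).sup (fun i => Nf j i))) with hCdef
  have hC2 : 2 ≤ C := Nat.le_add_right 2 _
  have hpath : ∀ j i : ℕ+, j ≤ n →
      ∃ p : List ℕ+, p.length = C ∧ Adm A p ∧ p.head? = some j ∧ p.getLast? = some i := by
    intro j i hj
    have hjmem : j ∈ Finset.Icc 1 n := Finset.mem_Icc.mpr ⟨j.one_le, hj⟩
    have hsup := Finset.le_sup
      (f := fun j => max (Nf j J) ((Finset.Icc 1 NJ).sup (fun i => Nf j i))) hjmem
    rcases le_or_gt NJ i with hi | hi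
    · have h1 : Nf j J ≤ C - 2 := by
        have h2 := le_trans (le_max_left (Nf j J) ((Finset.Icc 1 NJ).sup (fun i => Nf j i))) hsup
        omega
      obtain ⟨w, hw1, hw2, hw3, hw4⟩ := hNf j J (C - 2) h1
      refine ⟨w ++ [i], ?_, ?_, ?_, ?_⟩
      · simp only [List.length_append, hw1, List.length_singleton]; omega
      · rw [Adm, List.Chain', List.isChain_append]
        refine ⟨hw2, List.isChain_singleton _, ?_⟩
        intro x hx y hy
        simp only [List.head?_cons, Option.mem_def, Option.some.injEq] at hy
        rw [hw4] at hx
        simp only [Option.mem_def, Option.some.injEq] at hx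
        subst hx; subst hy
        exact hNJ.1 i hi
      · rw [List.head?_append, hw3]; rfl
      · exact List.getLast?_concat
    · have himem : i ∈ Finset.Icc 1 NJ := Finset.mem_Icc.mpr ⟨i.one_le, le_of_lt hi⟩
      have h1 : Nf j i ≤ C - 1 := by
        have h3 : Nf j i ≤ (Finset.Icc 1 NJ).sup (fun i => Nf j i) :=
          Finset.le_sup (f := fun i => Nf j i) himem
        have h2 := le_trans h3 (le_trans (le_max_right (Nf j J) _) hsup)
        omega
      obtain ⟨w, hw1, hw2, hw3, hw4⟩ := hNf j i (C - 1) h1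
      exact ⟨w, by rw [hw1]; omega, hw2, hw3, hw4⟩
  choose P hP1 hP2 hP3 hP4 using hpath
  set Q : ℕ+ → ℕ+ → List ℕ+ := fun j i => if h : j ≤ n then P j i h else [] with hQdef
  have hcount : ∀ m : ℕ, 1 ≤ m →
      ((LWords A m n).ncard : ℝ) ≤ ∑ j ∈ Finset.Icc 1 n, ((Loops A (m + C - 2) j).ncard : ℝ) := by
    intro m hm
    set Φ : List ℕ+ → List ℕ+ :=
      fun w => Q (w.getLast?.getD 1) (w.head?.getD 1) ++ w.tail with hPhidef
    have hcons : ∀ w ∈ LWords A m n, w = (w.head?.getD 1) :: w.tail := by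
      rintro w ⟨hlen, -, -⟩
      cases w with
      | nil => rw [List.length_nil] at hlen; omega
      | cons a t => rfl
    have hmem : ∀ w ∈ LWords A m n, ∃ hj : (w.getLast?.getD 1) ≤ n,
        Φ w = P (w.getLast?.getD 1) (w.head?.getD 1) hj ++ w.tail ∧
        Φ w ∈ Loops A (m + C - 2) (w.getLast?.getD 1) := by
      rintro w hw
      obtain ⟨hlen, hadm, hlast⟩ := hw
      obtain ⟨a, t, rfl⟩ : ∃ a t, w = a :: t := by
        cases w with
        | nil => rw [List.length_nil] at hlen; omega
        | cons a t => exact ⟨a, t, rfl⟩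
      have hne : (a :: t) ≠ [] := List.cons_ne_nil _ _
      have hjlast : (a :: t).getLast? = some ((a :: t).getLast hne) :=
        List.getLast?_eq_getLast_of_ne_nil hne
      set j : ℕ+ := (a :: t).getLast hne with hjdef
      have hgetD : ((a :: t).getLast?.getD 1) = j := by rw [hjlast]; rfl
      have hj : j ≤ n := hlast j (by rw [hjlast]; rfl)
      have hheadD : ((a :: t).head?.getD 1) = a := rfl
      rw [hgetD, hheadD]
      refine ⟨hj, ?_, ?_⟩
      · simp only [hPhidef, hQdef, hgetD, hheadD, dif_pos hj]
      · have hPhi : Φ (a :: t) = P j a hj ++ t := by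
          simp only [hPhidef, hQdef, hgetD, hheadD, dif_pos hj]; rfl
        rw [hPhi]
        have hlenp := hP1 j a hj
        have hlent : t.length = m - 1 := by
          rw [List.length_cons] at hlen; omega
        refine ⟨?_, ?_, ?_, ?_⟩
        · rw [List.length_append, hlenp, hlent]; omega
        · rw [Adm, List.Chain', List.isChain_append]
          refine ⟨hP2 j a hj, hadm.tail, ?_⟩
          intro x hx y hy
          rw [hP4 j a hj] at hx
          simp only [Option.mem_def, Option.some.injEq] at hx
          subst hx
          cases t with
          | nil => simp at hy
          | cons b t' =>
            simp only [List.tail_cons, List.head?_cons, Option.mem_def, Option.some.injEq] at hy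
            subst hy
            exact (List.isChain_cons_cons.mp hadm).1
        · rw [List.head?_append, hP3 j a hj]; rfl
        · cases t with
          | nil =>
            have : j = a := by simp [hjdef]
            rw [List.append_nil, hP4 j a hj, this]
          | cons b t' =>
            rw [List.getLast?_append, List.getLast?_eq_getLast_of_ne_nil (List.cons_ne_nil b t')]
            have : (a :: b :: t').getLast hne = (b :: t').getLast (List.cons_ne_nil b t') :=
              (List.getLast_cons (List.cons_ne_nil b t'))
            rw [← hjdef] at this  -- maybe unneeded
            simp [hjdef, this]
    have hinj : Set.InjOn Φ (LWords A m n) := by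
      intro w hw w' hw' heq
      obtain ⟨hj, hfw, -⟩ := hmem w hw
      obtain ⟨hj', hfw', -⟩ := hmem w' hw'
      rw [hfw, hfw'] at heq
      obtain ⟨hpe, hte⟩ := List.append_inj heq (by rw [hP1, hP1])
      have hih : w.head?.getD 1 = w'.head?.getD 1 := by
        have h4 := hP4 (w.getLast?.getD 1) (w.head?.getD 1) hj
        have h4' := hP4 (w'.getLast?.getD 1) (w'.head?.getD 1) hj'
        rw [hpe, h4'] at h4
        exact (Option.some_injective _ h4).symm
      rw [hcons w hw, hcons w' hw', hih, hte]
    calc ((LWords A m n).ncard : ℝ) = ((Φ '' LWords A m n).ncard : ℝ) := by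
          rw [Set.ncard_image_of_injOn hinj]
    _ ≤ (((⋃ j ∈ Finset.Icc 1 n, Loops A (m + C - 2) j)).ncard : ℝ) := by
          apply Nat.cast_le.mpr
          apply Set.ncard_le_ncard
          · rintro x ⟨w, hw, rfl⟩
            obtain ⟨hj, -, hloop⟩ := hmem w hw
            exact Set.mem_iUnion₂.mpr
              ⟨_, Finset.mem_Icc.mpr ⟨PNat.one_le _, hj⟩, hloop⟩
          · exact Set.Finite.biUnion (Finset.Icc 1 n).finite_toSet
              (fun j _ => loops_finite A M hUCF _ j)
    _ ≤ _ := by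
          have := my_ncard_biUnion_le (Finset.Icc 1 n) (fun j => Loops A (m + C - 2) j)
          calc ((⋃ j ∈ Finset.Icc 1 n, Loops A (m + C - 2) j).ncard : ℝ)
              ≤ ((∑ j ∈ Finset.Icc 1 n, (Loops A (m + C - 2) j).ncard : ℕ) : ℝ) :=
                Nat.cast_le.mpr this
          _ = _ := by push_cast; rfl
  have hnonneg : ∀ u : ℕ → ℕ, (0 : EReal) ≤ Filter.limsup
      (fun m : ℕ => ((Real.log (u m) / (m : ℝ) : ℝ) : EReal)) Filter.atTop := by
    intro u
    have h1 : ((0:ℝ) : EReal) ≤ Filter.limsup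
        (fun m : ℕ => ((Real.log (u m) / (m : ℝ) : ℝ) : EReal)) Filter.atTop := by
      rw [← Filter.limsup_const (f := (Filter.atTop : Filter ℕ)) (((0:ℝ) : EReal))]
      refine Filter.limsup_le_limsup (Filter.Eventually.of_forall fun m => ?_)
      exact EReal.coe_le_coe_iff.mpr (div_nonneg (Real.log_natCast_nonneg _) (Nat.cast_nonneg m))
    simpa using h1
  set Lim : ℕ+ → EReal := fun j => Filter.limsup
    (fun m : ℕ => ((Real.log ((Loops A m j).ncard) / (m : ℝ) : ℝ) : EReal)) Filter.atTop with hLimdef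
  set S' : EReal := (Finset.Icc 1 n).sup Lim with hS'def
  have hS'S : S' ≤ ⨆ j : ℕ+, ⨆ _ : j ≤ n, Lim j := by
    refine Finset.sup_le fun j hj => ?_
    exact le_iSup₂ (f := fun (j : ℕ+) (_ : j ≤ n) => Lim j) j (Finset.mem_Icc.mp hj).2
  have hT0 : (0 : EReal) ≤ Filter.limsup (fun m : ℕ =>
      ((Real.log (ISup A n m) / (m : ℝ) : ℝ) : EReal)) Filter.atTop := hnonneg _
  have hS'0 : (0 : EReal) ≤ S' := by
    refine le_trans (hnonneg (fun m => (Loops A m 1).ncard)) ?_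
    exact Finset.le_sup (f := Lim) (Finset.mem_Icc.mpr ⟨le_refl 1, n.one_le⟩)
  set K : ℝ := ((Finset.Icc 1 n).card : ℝ) with hKdef
  have hK1 : (1:ℝ) ≤ K := by
    have : 0 < (Finset.Icc 1 n).card :=
      Finset.card_pos.mpr ⟨1, Finset.mem_Icc.mpr ⟨le_refl 1, n.one_le⟩⟩
    rw [hKdef]; exact_mod_cast this
  have key : ∀ b : ℝ, S' < (b : EReal) →
      Filter.limsup (fun m : ℕ =>
        ((Real.log ((LWords A m n).ncard) / (m : ℝ) : ℝ) : EReal)) Filter.atTop ≤ (b : EReal) := by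
    intro b hb
    obtain ⟨a, ha1, ha2⟩ := EReal.exists_between_coe_real hb
    have hab : a < b := by exact_mod_cast ha2
    have ha0 : (0:ℝ) < a := by
      have := lt_of_le_of_lt hS'0 ha1
      exact_mod_cast this
    have hev : ∀ᶠ m in Filter.atTop, ∀ j ∈ Finset.Icc 1 n,
        ((Loops A m j).ncard : ℝ) ≤ Real.exp (a * m) := by
      rw [Filter.eventually_all_finset]
      intro j hj
      have hlt : Lim j < (a : EReal) := lt_of_le_of_lt (Finset.le_sup (f := Lim) hj) ha1
      have hev1 := Filter.eventually_lt_of_limsup_lt hlt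
      filter_upwards [hev1, Filter.eventually_ge_atTop 1] with m hm hm1
      have hm2 : Real.log ((Loops A m j).ncard) / m < a := by exact_mod_cast hm
      rcases Nat.eq_zero_or_pos (Loops A m j).ncard with h0 | h0
      · rw [h0]
        exact le_trans (by norm_num) (Real.exp_pos _).le
      · have hc1 : (1:ℝ) ≤ ((Loops A m j).ncard : ℝ) := by exact_mod_cast h0
        have hmpos : (0:ℝ) < m := by exact_mod_cast hm1
        rw [div_lt_iff₀ hmpos] at hm2
        calc ((Loops A m j).ncard : ℝ)
            = Real.exp (Real.log ((Loops A m j).ncard)) :=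
              (Real.exp_log (by linarith)).symm
        _ ≤ Real.exp (a * m) := Real.exp_le_exp.mpr (by linarith)
    obtain ⟨m0, hm0⟩ := Filter.eventually_atTop.mp hev
    have hfin : ∀ᶠ m : ℕ in Filter.atTop, Real.log ((LWords A m n).ncard) / m ≤ b := by
      have htend : Filter.Tendsto (fun m : ℕ => a + (Real.log K + a * (C:ℝ)) / (m:ℝ))
          Filter.atTop (nhds (a + 0)) :=
        Filter.Tendsto.add tendsto_const_nhds (tendsto_const_div_atTop_nhds_zero_nat _)
      have hevb : ∀ᶠ m : ℕ in Filter.atTop,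
          a + (Real.log K + a * (C:ℝ)) / (m:ℝ) ≤ b :=
        Filter.Tendsto.eventually_le_const (by rw [add_zero]; exact hab) htend
      filter_upwards [Filter.eventually_ge_atTop (max 1 m0), hevb] with m hm hb2
      have hm1 : 1 ≤ m := le_trans (le_max_left _ _) hm
      have hmm0 : m0 ≤ m + C - 2 := by
        have := le_trans (le_max_right _ _) hm
        omega
      have hbound := hcount m hm1
      have hsum : (∑ j ∈ Finset.Icc 1 n, ((Loops A (m + C - 2) j).ncard : ℝ))
          ≤ K * Real.exp (a * ((m + C - 2 : ℕ) : ℝ)) := by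
        have := Finset.sum_le_card_nsmul (Finset.Icc 1 n)
          (fun j => ((Loops A (m + C - 2) j).ncard : ℝ))
          (Real.exp (a * ((m + C - 2 : ℕ) : ℝ)))
          (fun j hj => hm0 (m + C - 2) hmm0 j hj)
        rw [nsmul_eq_mul] at this
        exact this
      rcases Nat.eq_zero_or_pos (LWords A m n).ncard with h0 | h0
      · rw [h0]
        have : (0:ℝ) < b := lt_trans ha0 hab
        simp only [Nat.cast_zero, Real.log_zero, zero_div]
        linarith
      · have hc1 : (1:ℝ) ≤ ((LWords A m n).ncard : ℝ) := by exact_mod_cast h0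
        have hmpos : (0:ℝ) < m := by exact_mod_cast hm1
        have hKpos : (0:ℝ) < K := lt_of_lt_of_le one_pos hK1
        have hlog : Real.log ((LWords A m n).ncard)
            ≤ Real.log K + a * ((m + C - 2 : ℕ) : ℝ) := by
          have h2 : ((LWords A m n).ncard : ℝ) ≤ K * Real.exp (a * ((m + C - 2 : ℕ) : ℝ)) :=
            le_trans hbound hsum
          calc Real.log ((LWords A m n).ncard)
              ≤ Real.log (K * Real.exp (a * ((m + C - 2 : ℕ) : ℝ))) :=
                Real.log_le_log (by linarith) h2
          _ = Real.log K + a * ((m + C - 2 : ℕ) : ℝ) := by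
                rw [Real.log_mul (ne_of_gt hKpos) (ne_of_gt (Real.exp_pos _)), Real.log_exp]
        have hc' : ((m + C - 2 : ℕ) : ℝ) ≤ (m:ℝ) + (C:ℝ) := by
          have h3 : ((m + C - 2 : ℕ) : ℝ) ≤ ((m + C : ℕ) : ℝ) := by
            exact_mod_cast Nat.sub_le _ _
          rw [Nat.cast_add] at h3
          exact h3
        calc Real.log ((LWords A m n).ncard) / m
            ≤ (Real.log K + a * ((m + C - 2 : ℕ) : ℝ)) / m :=
              div_le_div_of_nonneg_right hlog hmpos.le |>.trans_eq rfl
        _ ≤ (Real.log K + a * ((m:ℝ) + (C:ℝ))) / m := by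
              apply div_le_div_of_nonneg_right _ hmpos.le
              nlinarith
        _ = a + (Real.log K + a * (C:ℝ)) / m := by
              field_simp
              ring
        _ ≤ b := hb2
    calc Filter.limsup (fun m : ℕ =>
          ((Real.log ((LWords A m n).ncard) / (m : ℝ) : ℝ) : EReal)) Filter.atTop
        ≤ Filter.limsup (fun _ : ℕ => ((b:ℝ) : EReal)) Filter.atTop :=
          Filter.limsup_le_limsup (hfin.mono fun m hm => EReal.coe_le_coe_iff.mpr hm)
    _ = ((b:ℝ) : EReal) := Filter.limsup_const _
  by_cases hS'top : S' = ⊤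
  · have hStop : (⨆ j : ℕ+, ⨆ _ : j ≤ n, Lim j) = ⊤ := top_le_iff.mp (hS'top ▸ hS'S)
    rw [hStop, EReal.top_add_of_ne_bot (ne_of_gt (lt_of_lt_of_le EReal.bot_lt_zero hT0))]
    exact le_top
  · have hle : Filter.limsup (fun m : ℕ =>
        ((Real.log ((LWords A m n).ncard) / (m : ℝ) : ℝ) : EReal)) Filter.atTop ≤ S' := by
      by_contra hcon
      push_neg at hcon
      obtain ⟨b, hb1, hb2⟩ := EReal.exists_between_coe_real hcon
      exact absurd (key b hb1) (not_le.mpr hb2)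
    refine le_trans hle (le_trans hS'S ?_)
    calc (⨆ j : ℕ+, ⨆ _ : j ≤ n, Lim j)
        = (⨆ j : ℕ+, ⨆ _ : j ≤ n, Lim j) + 0 := (add_zero _).symm
    _ ≤ _ := add_le_add le_rfl hT0
end
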